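/- Let μ ≠ 0, ε = ±1 with εμ < 0, set s = √(−εμ), and let k₁, k₂, k₃, k₄ ∈ ℝ. Define on ℝ³ the vector field X = (X₁, X₂, X₃) with X₁ = (1/μ)(k₁e^{sx₁} + k₂e^{−sx₁} + k₃), X₂ = −(1/μ²)(k₁(μsx₂ − ε)e^{sx₁} − k₂(μsx₂ + ε)e^{−sx₁}) + k₄e^{−μx₃}, X₃ = (s/μ²)(k₁e^{sx₁} − k₂e^{−sx₁}) − μ/2. Then, for the metric g with components g₁₁ = (ε/μ)(e^{−2μx₃} − 1), g₁₂ = 1, g₁₃ = μx₂, g₃₃ = 1, and its Ricci tensor ρ (ρ₁₁ = −½εμ(3e^{−2μx₃} − 1), ρ₁₂ = −½μ², ρ₁₃ = −½μ³x₂, ρ₃₃ = −½μ², other entries 0), the Lie derivative satisfies (ℒ_X g)_{ij} + ρ_{ij} = −½μ²·g_{ij} for all i, j ∈ {1,2,3} at every point of ℝ³. -/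

import Mathlib

/-- A point of `ℝ³`. -/
abbrev Pt := Fin 3 → ℝ

/-- Partial derivative `∂ᵢ f` of a scalar function on `ℝ³`. -/
noncomputable def pder (i : Fin 3) (f : Pt → ℝ) (p : Pt) : ℝ :=
  fderiv ℝ f p (Pi.single i 1)

/-- The matrix of the metric `g` at a point `p = (x₁,x₂,x₃)`. -/
noncomputable def gMat (μ ε : ℝ) (p : Pt) : Matrix (Fin 3) (Fin 3) ℝ :=
  ![![(ε/μ) * (Real.exp (-(2*μ*p 2)) - 1), 1, μ * p 1],
    ![1, 0, 0],
    ![μ * p 1, 0, 1]]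

/-- The Ricci tensor of `g`. -/
noncomputable def RicciExp (μ ε : ℝ) (p : Pt) : Matrix (Fin 3) (Fin 3) ℝ :=
  ![![-(1/2) * ε * μ * (3 * Real.exp (-(2*μ*p 2)) - 1), -(1/2) * μ^2, -(1/2) * μ^3 * p 1],
    ![-(1/2) * μ^2, 0, 0],
    ![-(1/2) * μ^3 * p 1, 0, -(1/2) * μ^2]]

/-- The components of the Lie derivative of `g` along `X`:
`(ℒ_X g)_{ij} = X^k∂_k g_{ij} + g_{kj}∂_i X^k + g_{ik}∂_j X^k` (sum over `k`). -/
noncomputable def lieDeriv (μ ε : ℝ) (X : Pt → Pt) (i j : Fin 3) (p : Pt) : ℝ :=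
  ∑ k : Fin 3, (X p k * pder k (fun q => gMat μ ε q i j) p
    + gMat μ ε p k j * pder i (fun q => X q k) p
    + gMat μ ε p i k * pder j (fun q => X q k) p)

/-- The soliton vector field in the case `εμ < 0`, with `s = √(−εμ)`. -/
noncomputable def solitonX (μ ε k₁ k₂ k₃ k₄ : ℝ) : Pt → Pt := fun p =>
  let s := Real.sqrt (-(ε*μ))
  ![(1/μ) * (k₁ * Real.exp (s * p 0) + k₂ * Real.exp (-(s * p 0)) + k₃),
    -(1/μ^2) * (k₁ * (μ * s * p 1 - ε) * Real.exp (s * p 0)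
      - k₂ * (μ * s * p 1 + ε) * Real.exp (-(s * p 0))) + k₄ * Real.exp (-(μ * p 2)),
    (s/μ^2) * (k₁ * Real.exp (s * p 0) - k₂ * Real.exp (-(s * p 0))) - μ/2]

theorem pder_const' (a : ℝ) (p : Pt) (i : Fin 3) : pder i (fun _ => a) p = 0 := by
  rw [pder, fderiv_fun_const]; simp

theorem pder_lin' (a : ℝ) (p : Pt) (i : Fin 3) :
    pder i (fun q => a * q 1) p = ![0, a, 0] i := by
  have h := (hasFDerivAt_apply (𝕜 := ℝ) 1 p).const_mul a
  rw [pder, h.fderiv]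
  fin_cases i <;>
    simp only [ContinuousLinearMap.add_apply, ContinuousLinearMap.sub_apply,
      ContinuousLinearMap.smul_apply, ContinuousLinearMap.neg_apply,
      ContinuousLinearMap.proj_apply, Pi.single_apply, smul_eq_mul,
      Matrix.cons_val_zero, Matrix.cons_val_one, Matrix.head_cons,
      Matrix.cons_val_two, Matrix.tail_cons, Fin.ext_iff] <;>
    (try norm_num) <;> (try ring) <;> (try tauto)

theorem pder_g00' (a b : ℝ) (p : Pt) (i : Fin 3) :
    pder i (fun q => a * (Real.exp (-(b * q 2)) - 1)) p
      = ![0, 0, -(a * b * Real.exp (-(b * p 2)))] i := by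
  have h2 := hasFDerivAt_apply (𝕜 := ℝ) 2 p
  have h := (((h2.const_mul b).neg.exp.sub_const 1).const_mul a)
  rw [pder]; erw [h.fderiv]
  fin_cases i <;>
    simp only [ContinuousLinearMap.add_apply, ContinuousLinearMap.sub_apply,
      ContinuousLinearMap.smul_apply, ContinuousLinearMap.neg_apply,
      ContinuousLinearMap.proj_apply, Pi.single_apply, smul_eq_mul,
      Matrix.cons_val_zero, Matrix.cons_val_one, Matrix.head_cons,
      Matrix.cons_val_two, Matrix.tail_cons, Fin.ext_iff] <;>
    (try norm_num) <;> (try ring) <;> (try tauto)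

theorem pderA (s k₁ k₂ k₃ c : ℝ) (p : Pt) (i : Fin 3) :
    pder i (fun q : Pt => c * (k₁ * Real.exp (s * q 0) + k₂ * Real.exp (-(s * q 0)) + k₃)) p
      = ![c * (k₁ * s * Real.exp (s * p 0) - k₂ * s * Real.exp (-(s * p 0))), 0, 0] i := by
  have h0 := hasFDerivAt_apply (𝕜 := ℝ) 0 p
  have h := ((((h0.const_mul s).exp.const_mul k₁).add
      ((h0.const_mul s).neg.exp.const_mul k₂)).add_const k₃).const_mul c
  rw [pder]; erw [h.fderiv]
  fin_cases i <;>
    simp only [ContinuousLinearMap.add_apply, ContinuousLinearMap.sub_apply,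
      ContinuousLinearMap.smul_apply, ContinuousLinearMap.neg_apply,
      ContinuousLinearMap.proj_apply, Pi.single_apply, smul_eq_mul,
      Matrix.cons_val_zero, Matrix.cons_val_one, Matrix.head_cons,
      Matrix.cons_val_two, Matrix.tail_cons, Fin.ext_iff] <;>
    (try norm_num) <;> (try ring) <;> (try tauto)

theorem pderB (s k₁ k₂ k₄ μ ε c : ℝ) (p : Pt) (i : Fin 3) :
    pder i (fun q : Pt => c * (k₁ * (μ * s * q 1 - ε) * Real.exp (s * q 0)
        - k₂ * (μ * s * q 1 + ε) * Real.exp (-(s * q 0))) + k₄ * Real.exp (-(μ * q 2))) p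
      = ![c * (k₁ * (μ * s * p 1 - ε) * s * Real.exp (s * p 0)
            + k₂ * (μ * s * p 1 + ε) * s * Real.exp (-(s * p 0))),
          c * (k₁ * μ * s * Real.exp (s * p 0) - k₂ * μ * s * Real.exp (-(s * p 0))),
          -(k₄ * μ * Real.exp (-(μ * p 2)))] i := by
  have h0 := hasFDerivAt_apply (𝕜 := ℝ) 0 p
  have h1 := hasFDerivAt_apply (𝕜 := ℝ) 1 p
  have h2 := hasFDerivAt_apply (𝕜 := ℝ) 2 p
  have h := (((((h1.const_mul (μ*s)).sub_const ε).const_mul k₁).mul (h0.const_mul s).exp).sub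
      ((((h1.const_mul (μ*s)).add_const ε).const_mul k₂).mul (h0.const_mul s).neg.exp)).const_mul c
      |>.add ((h2.const_mul μ).neg.exp.const_mul k₄)
  rw [pder]; erw [h.fderiv]
  fin_cases i <;>
    simp only [ContinuousLinearMap.add_apply, ContinuousLinearMap.sub_apply,
      ContinuousLinearMap.smul_apply, ContinuousLinearMap.neg_apply,
      ContinuousLinearMap.proj_apply, Pi.single_apply, smul_eq_mul,
      Matrix.cons_val_zero, Matrix.cons_val_one, Matrix.head_cons,
      Matrix.cons_val_two, Matrix.tail_cons, Fin.ext_iff] <;>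
    (try norm_num) <;> (try ring) <;> (try tauto)

theorem pderC (s k₁ k₂ c d : ℝ) (p : Pt) (i : Fin 3) :
    pder i (fun q : Pt => c * (k₁ * Real.exp (s * q 0) - k₂ * Real.exp (-(s * q 0))) - d) p
      = ![c * (k₁ * s * Real.exp (s * p 0) + k₂ * s * Real.exp (-(s * p 0))), 0, 0] i := by
  have h0 := hasFDerivAt_apply (𝕜 := ℝ) 0 p
  have h := ((((h0.const_mul s).exp.const_mul k₁).sub
      ((h0.const_mul s).neg.exp.const_mul k₂)).const_mul c).sub_const d
  rw [pder]; erw [h.fderiv]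
  fin_cases i <;>
    simp only [ContinuousLinearMap.add_apply, ContinuousLinearMap.sub_apply,
      ContinuousLinearMap.smul_apply, ContinuousLinearMap.neg_apply,
      ContinuousLinearMap.proj_apply, Pi.single_apply, smul_eq_mul,
      Matrix.cons_val_zero, Matrix.cons_val_one, Matrix.head_cons,
      Matrix.cons_val_two, Matrix.tail_cons, Fin.ext_iff] <;>
    (try norm_num) <;> (try ring) <;> (try tauto)

set_option maxHeartbeats 4000000 in
/-- In the case `εμ < 0`, `(ℝ³, g, X)` is an expanding Ricci soliton with `λ = −½μ²`:
`(ℒ_X g)_{ij} + ρ_{ij} = −½μ²·g_{ij}` everywhere. -/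
theorem ricci_soliton_hyperbolic (μ ε k₁ k₂ k₃ k₄ : ℝ) (hμ : μ ≠ 0)
    (hε : ε = 1 ∨ ε = -1) (hεμ : ε * μ < 0) :
    ∀ (p : Pt) (i j : Fin 3),
      lieDeriv μ ε (solitonX μ ε k₁ k₂ k₃ k₄) i j p + RicciExp μ ε p i j =
        -(1/2) * μ^2 * gMat μ ε p i j := by
  intro p i j
  rcases hε with rfl | rfl
  · obtain ⟨s, hs⟩ : ∃ t, Real.sqrt (-(1*μ)) = t := ⟨_, rfl⟩
    have hneg : (0:ℝ) < -(1*μ) := by linarith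
    have hsq : s^2 = -(1*μ) := by rw [← hs]; exact Real.sq_sqrt hneg.le
    have hs0 : s ≠ 0 := by
      have := Real.sqrt_pos.mpr hneg; rw [hs] at this; exact ne_of_gt this
    have hE2 : Real.exp (-(s * p 0)) = (Real.exp (s * p 0))⁻¹ := Real.exp_neg _
    have hG : Real.exp (-(2*μ*p 2)) = Real.exp (-(μ*p 2)) * Real.exp (-(μ*p 2)) := by
      rw [← Real.exp_add]; ring_nf
    have hμs : μ = -s^2 := by nlinarith [hsq]
    fin_cases i <;> fin_cases j <;>
      (simp only [lieDeriv, Fin.sum_univ_three, solitonX, RicciExp, gMat,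
        Fin.zero_eta, Fin.mk_one, Fin.reduceFinMk,
        Matrix.cons_val_zero, Matrix.cons_val_one, Matrix.head_cons,
        Matrix.cons_val_two, Matrix.tail_cons]
       try simp only [hs]
       try simp only [pderA, pderB, pderC, pder_g00', pder_lin', pder_const']
       try simp only [Matrix.cons_val_zero, Matrix.cons_val_one, Matrix.head_cons,
         Matrix.cons_val_two, Matrix.tail_cons]
       try simp only [hG, hE2]
       try simp only [hμs]
       try field_simp
       try ring)
  · obtain ⟨s, hs⟩ : ∃ t, Real.sqrt (-(-1*μ)) = t := ⟨_, rfl⟩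
    have hneg : (0:ℝ) < -(-1*μ) := by linarith
    have hsq : s^2 = -(-1*μ) := by rw [← hs]; exact Real.sq_sqrt hneg.le
    have hs0 : s ≠ 0 := by
      have := Real.sqrt_pos.mpr hneg; rw [hs] at this; exact ne_of_gt this
    have hE2 : Real.exp (-(s * p 0)) = (Real.exp (s * p 0))⁻¹ := Real.exp_neg _
    have hG : Real.exp (-(2*μ*p 2)) = Real.exp (-(μ*p 2)) * Real.exp (-(μ*p 2)) := by
      rw [← Real.exp_add]; ring_nf
    have hμs : μ = s^2 := by nlinarith [hsq]
    fin_cases i <;> fin_cases j <;>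
      (simp only [lieDeriv, Fin.sum_univ_three, solitonX, RicciExp, gMat,
        Fin.zero_eta, Fin.mk_one, Fin.reduceFinMk,
        Matrix.cons_val_zero, Matrix.cons_val_one, Matrix.head_cons,
        Matrix.cons_val_two, Matrix.tail_cons]
       try simp only [hs]
       try simp only [pderA, pderB, pderC, pder_g00', pder_lin', pder_const']
       try simp only [Matrix.cons_val_zero, Matrix.cons_val_one, Matrix.head_cons,
         Matrix.cons_val_two, Matrix.tail_cons]
       try simp only [hG, hE2]
       try simp only [hμs]
       try field_simp
       try ring)
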